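/- Let S_{A₀}, S_{A₁}, S_L, S_M be finite types. Let A₀ : Ω → S_{A₀}, L₁ : Ω → S_L, M₁ : Ω → S_M, A₁ : Ω → S_{A₁} and Y : Ω → ℝ be random variables with Y integrable, and fix target values a₀ ∈ S_{A₀}, a₁ ∈ S_{A₁}. Let Lᵃ : Ω → S_L, Mᵃ : Ω → S_M and Yᵃ : Ω → ℝ be potential outcomes (representing L₁(a₀), M₁(a₀) and Y(a₀,a₁)), with Yᵃ integrable, satisfying consistency: L₁(ω) = Lᵃ(ω) and M₁(ω) = Mᵃ(ω) whenever A₀(ω) = a₀, and Y(ω) = Yᵃ(ω) whenever A₀(ω) = a₀ and A₁(ω) = a₁. Assume: (i) the triple ω ↦ (Lᵃ(ω), Mᵃ(ω), Yᵃ(ω)) is independent of A₀; (ii) sequential ignorability: for every l ∈ S_L and m ∈ S_M with P(E_{l,m}) > 0, where E_{l,m} = {A₀ = a₀, L₁ = l, M₁ = m}, and every measurable B ⊆ ℝ, P(Yᵃ ∈ B, A₁ = a₁ | E_{l,m}) = P(Yᵃ ∈ B | E_{l,m}) · P(A₁ = a₁ | E_{l,m}); (iii) positivity: P(A₀ = a₀)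 > 0 and P(A₁ = a₁ | E_{l,m}) > 0 whenever P(E_{l,m}) > 0. Then E[Yᵃ] = Σ_{(l,m) : P(E_{l,m}) > 0} E[Y | A₀ = a₀, L₁ = l, M₁ = m, A₁ = a₁] · P(L₁ = l, M₁ = m | A₀ = a₀). -/

import Mathlib

open MeasureTheory ProbabilityTheory

/-- If the pushforward factorizes on a set `T`, the set integral factorizes. -/
lemma aux_setIntegral_factor {Ω : Type*} [MeasurableSpace Ω] (μ : Measure Ω)
    (f : Ω → ℝ) (hf : Measurable f) (T : Set Ω)
    (h : ∀ B : Set ℝ, MeasurableSet B → μ (f ⁻¹' B ∩ T) = μ (f ⁻¹' B) * μ T) :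
    ∫ x in T, f x ∂μ = (μ T).toReal * ∫ x, f x ∂μ := by
  have hmap : Measure.map f (μ.restrict T) = μ T • Measure.map f μ := by
    ext B hB
    rw [Measure.map_apply hf hB, Measure.restrict_apply (hf hB), h B hB, Measure.smul_apply,
      Measure.map_apply hf hB, smul_eq_mul, mul_comm]
  calc ∫ x in T, f x ∂μ = ∫ y, y ∂(Measure.map f (μ.restrict T)) :=
        (integral_map hf.aemeasurable aestronglyMeasurable_id).symm
    _ = ∫ y, y ∂(μ T • Measure.map f μ) := by rw [hmap]
    _ = (μ T).toReal * ∫ y, y ∂(Measure.map f μ) := by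
        rw [integral_smul_measure]; rfl
    _ = (μ T).toReal * ∫ x, f x ∂μ := by
        rw [show (∫ y, y ∂(Measure.map f μ)) = ∫ x, f x ∂μ from
          integral_map hf.aemeasurable aestronglyMeasurable_id]

/-- Conditioning on an independent event does not change the expectation. -/
lemma aux_cond_integral_eq {Ω : Type*} [MeasurableSpace Ω] (μ : Measure Ω)
    [IsFiniteMeasure μ]
    (f : Ω → ℝ) (hf : Measurable f) (T : Set Ω) (hT0 : μ T ≠ 0)
    (h : ∀ B : Set ℝ, MeasurableSet B → μ (f ⁻¹' B ∩ T) = μ (f ⁻¹' B) * μ T) :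
    ∫ x, f x ∂(μ[|T]) = ∫ x, f x ∂μ := by
  have hne : (μ T).toReal ≠ 0 := ENNReal.toReal_ne_zero.mpr ⟨hT0, measure_ne_top μ T⟩
  rw [ProbabilityTheory.cond, integral_smul_measure, aux_setIntegral_factor μ f hf T h,
    ENNReal.toReal_inv, smul_eq_mul, ← mul_assoc, inv_mul_cancel₀ hne, one_mul]

open scoped Classical in
/-- The g-formula for the total effect of two sequential treatments:
`E[Y(a₀,a₁)] = Σ_{l,m} E[Y | A₀ = a₀, L₁ = l, M₁ = m, A₁ = a₁] · P(L₁ = l, M₁ = m | A₀ = a₀)`,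
under consistency, randomization of `A₀`, sequential ignorability of `A₁`, and positivity. -/
theorem g_formula_two_treatments
    {Ω : Type*} [MeasurableSpace Ω] (P : Measure Ω) [IsProbabilityMeasure P]
    {SA₀ : Type*} [Fintype SA₀] [MeasurableSpace SA₀] [MeasurableSingletonClass SA₀]
    {SA₁ : Type*} [Fintype SA₁] [MeasurableSpace SA₁] [MeasurableSingletonClass SA₁]
    {SL : Type*} [Fintype SL] [MeasurableSpace SL] [MeasurableSingletonClass SL]
    {SM : Type*} [Fintype SM] [MeasurableSpace SM] [MeasurableSingletonClass SM]
    (A₀ : Ω → SA₀) (hA₀ : Measurable A₀)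
    (L₁ : Ω → SL) (hL₁ : Measurable L₁)
    (M₁ : Ω → SM) (hM₁ : Measurable M₁)
    (A₁ : Ω → SA₁) (hA₁ : Measurable A₁)
    (Y : Ω → ℝ) (hY : Measurable Y) (hYint : Integrable Y P)
    (a₀ : SA₀) (a₁ : SA₁)
    (La : Ω → SL) (hLa : Measurable La)
    (Ma : Ω → SM) (hMa : Measurable Ma)
    (Ya : Ω → ℝ) (hYa : Measurable Ya) (hYaInt : Integrable Ya P)
    (hconsL : ∀ ω, A₀ ω = a₀ → L₁ ω = La ω)
    (hconsM : ∀ ω, A₀ ω = a₀ → M₁ ω = Ma ω)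
    (hconsY : ∀ ω, A₀ ω = a₀ → A₁ ω = a₁ → Y ω = Ya ω)
    (hign₀ : IndepFun (fun ω => (La ω, Ma ω, Ya ω)) A₀ P)
    (hseqIgn : ∀ (l : SL) (m : SM),
      0 < P {ω | A₀ ω = a₀ ∧ L₁ ω = l ∧ M₁ ω = m} →
      ∀ (B : Set ℝ), MeasurableSet B →
        P[|{ω | A₀ ω = a₀ ∧ L₁ ω = l ∧ M₁ ω = m}] {ω | Ya ω ∈ B ∧ A₁ ω = a₁}
          = P[|{ω | A₀ ω = a₀ ∧ L₁ ω = l ∧ M₁ ω = m}] {ω | Ya ω ∈ B}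
            * P[|{ω | A₀ ω = a₀ ∧ L₁ ω = l ∧ M₁ ω = m}] {ω | A₁ ω = a₁})
    (hpos₀ : 0 < P {ω | A₀ ω = a₀})
    (hpos₁ : ∀ (l : SL) (m : SM),
      0 < P {ω | A₀ ω = a₀ ∧ L₁ ω = l ∧ M₁ ω = m} →
      0 < P[|{ω | A₀ ω = a₀ ∧ L₁ ω = l ∧ M₁ ω = m}] {ω | A₁ ω = a₁}) :
    ∫ ω, Ya ω ∂P
      = ∑ l : SL, ∑ m : SM,
          if 0 < P {ω | A₀ ω = a₀ ∧ L₁ ω = l ∧ M₁ ω = m} then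
            (∫ ω, Y ω ∂P[|{ω | A₀ ω = a₀ ∧ L₁ ω = l ∧ M₁ ω = m ∧ A₁ ω = a₁}])
              * (P[|{ω | A₀ ω = a₀}] {ω | L₁ ω = l ∧ M₁ ω = m}).toReal
          else 0 := by
  set s₀ : Set Ω := {ω | A₀ ω = a₀} with hs₀def
  have hs₀meas : MeasurableSet s₀ := hA₀ (measurableSet_singleton a₀)
  have hs₀ne : P s₀ ≠ 0 := hpos₀.ne'
  -- Step 1: Ya independent of A₀, so E[Ya] = E[Ya | A₀ = a₀]
  have hYaA₀ : IndepFun Ya A₀ P :=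
    hign₀.comp (measurable_snd.comp measurable_snd) measurable_id
  have step1 : ∫ ω, Ya ω ∂P = ∫ ω, Ya ω ∂(P[|s₀]) := by
    refine (aux_cond_integral_eq P Ya hYa s₀ hs₀ne ?_).symm
    intro B hB
    have := hYaA₀.measure_inter_preimage_eq_mul B {a₀} hB (measurableSet_singleton a₀)
    exact this
  -- set up the conditional measure μ = P[|s₀]
  set μ : Measure Ω := P[|s₀] with hμdef
  haveI : IsProbabilityMeasure μ := cond_isProbabilityMeasure hs₀ne
  have hYaμ : Integrable Ya μ := by
    rw [hμdef, ProbabilityTheory.cond]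
    exact (hYaInt.restrict).smul_measure (ENNReal.inv_ne_top.mpr hs₀ne)
  -- partition of Ω by values of (L₁, M₁)
  set t : SL × SM → Set Ω := fun p => {ω | L₁ ω = p.1 ∧ M₁ ω = p.2} with htdef
  have htmeas : ∀ p, MeasurableSet (t p) := fun p =>
    (hL₁ (measurableSet_singleton p.1)).inter (hM₁ (measurableSet_singleton p.2))
  have hdisj : Pairwise (Function.onFun Disjoint t) := by
    intro p q hpq
    refine Set.disjoint_left.mpr fun ω h1 h2 => hpq ?_
    exact Prod.ext (h1.1.symm.trans h2.1) (h1.2.symm.trans h2.2)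
  have hiUnion : (⋃ p : SL × SM, t p) = Set.univ := by
    ext ω
    simp only [Set.mem_iUnion, Set.mem_univ, iff_true]
    exact ⟨(L₁ ω, M₁ ω), rfl, rfl⟩
  have step2 : ∫ ω, Ya ω ∂μ = ∑ p : SL × SM, ∫ ω in t p, Ya ω ∂μ := by
    rw [← integral_iUnion_fintype htmeas hdisj (fun p => hYaμ.integrableOn), hiUnion,
      Measure.restrict_univ]
  rw [step1, step2, Fintype.sum_prod_type]
  refine Finset.sum_congr rfl fun l _ => Finset.sum_congr rfl fun m _ => ?_
  set E : Set Ω := {ω | A₀ ω = a₀ ∧ L₁ ω = l ∧ M₁ ω = m} with hEdef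
  have hEeq : s₀ ∩ t (l, m) = E := by
    ext ω; simp only [Set.mem_inter_iff, Set.mem_setOf_eq, hEdef, htdef, hs₀def]
  have hμt : μ (t (l, m)) = (P s₀)⁻¹ * P E := by
    rw [hμdef, cond_apply hs₀meas, hEeq]
  by_cases hE : 0 < P E
  · rw [if_pos hE]
    have hEmeas : MeasurableSet E := by
      rw [← hEeq]; exact hs₀meas.inter (htmeas (l, m))
    have hEne : P E ≠ 0 := hE.ne'
    haveI : IsProbabilityMeasure (P[|E]) := cond_isProbabilityMeasure hEne
    set T' : Set Ω := {ω | A₁ ω = a₁} with hT'def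
    have hT'meas : MeasurableSet T' := hA₁ (measurableSet_singleton a₁)
    set E' : Set Ω := {ω | A₀ ω = a₀ ∧ L₁ ω = l ∧ M₁ ω = m ∧ A₁ ω = a₁} with hE'def
    have hE'eq : E ∩ T' = E' := by
      ext ω; simp only [Set.mem_inter_iff, Set.mem_setOf_eq, hEdef, hE'def, hT'def]; tauto
    -- Step 3: sequential ignorability
    have step3 : ∫ ω, Ya ω ∂(P[|E']) = ∫ ω, Ya ω ∂(P[|E]) := by
      rw [← hE'eq, ← cond_cond_eq_cond_inter hEmeas hT'meas]
      refine aux_cond_integral_eq (P[|E]) Ya hYa T' (hpos₁ l m hE).ne' ?_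
      intro B hB
      have := hseqIgn l m hE B hB
      have hset : Ya ⁻¹' B ∩ T' = {ω | Ya ω ∈ B ∧ A₁ ω = a₁} := rfl
      have hset2 : Ya ⁻¹' B = {ω | Ya ω ∈ B} := rfl
      rw [hset, hset2, this]
    -- Step 4: consistency on E'
    have step4 : ∫ ω, Y ω ∂(P[|E']) = ∫ ω, Ya ω ∂(P[|E']) := by
      have hE'meas : MeasurableSet E' := by rw [← hE'eq]; exact hEmeas.inter hT'meas
      rw [ProbabilityTheory.cond, integral_smul_measure, integral_smul_measure]
      congr 1
      refine setIntegral_congr_fun hE'meas fun ω hω => ?_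
      exact hconsY ω hω.1 hω.2.2.2
    -- compute E[Ya | E]
    have hcondE : ∫ ω, Ya ω ∂(P[|E]) = (P E).toReal⁻¹ * ∫ ω in E, Ya ω ∂P := by
      rw [ProbabilityTheory.cond, integral_smul_measure, ENNReal.toReal_inv, smul_eq_mul]
    -- compute the LHS set integral
    have hlhs : ∫ ω in t (l, m), Ya ω ∂μ = (P s₀).toReal⁻¹ * ∫ ω in E, Ya ω ∂P := by
      rw [hμdef, ProbabilityTheory.cond, Measure.restrict_smul,
        Measure.restrict_restrict (htmeas (l, m)), Set.inter_comm, hEeq, integral_smul_measure,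
        ENNReal.toReal_inv, smul_eq_mul]
    rw [hlhs, step4, step3, hcondE, hμt]
    rw [ENNReal.toReal_mul, ENNReal.toReal_inv]
    have hPEne : (P E).toReal ≠ 0 := ENNReal.toReal_ne_zero.mpr ⟨hEne, measure_ne_top P E⟩
    field_simp
  · rw [if_neg hE]
    have : μ (t (l, m)) = 0 := by
      rw [hμt]
      simp [le_antisymm (not_lt.mp hE) zero_le]
    rw [Measure.restrict_eq_zero.mpr this, integral_zero_measure]
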